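/- arXiv:2305.04999 — 6 statements merged into one kernel-verified Lean document; each statement's English description precedes it below -/
import Mathlib

section
/- Let f be a proper lower semicontinuous convex function on a real Hilbert space H and let C = {(x,η) ∈ H × ℝ : η + f*(x) ≤ 0}. Then the Fenchel conjugate of the perspective 𝑓̃ of f is the indicator function of C, i.e., (𝑓̃)* = ι_C. -/
open scoped RealInnerProductSpace
open Filter Topology

/-- Fenchel conjugate of `f` on a real inner product space. -/
noncomputable def fenchel {H : Type*} [NormedAddCommGroup H] [InnerProductSpace ℝ H]
    (f : H → EReal) (u : H) : EReal :=
  ⨆ x : H, ((⟪x, u⟫ : ℝ) : EReal) - f x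

/-- Epigraph of an `EReal`-valued function. -/
def epi {E : Type*} (f : E → EReal) : Set (E × ℝ) := {p | f p.1 ≤ (p.2 : EReal)}

/-- `f` is proper, lower semicontinuous and convex. -/
def ProperLscConvex {E : Type*} [AddCommGroup E] [Module ℝ E] [TopologicalSpace E]
    (f : E → EReal) : Prop :=
  (∀ x, f x ≠ ⊥) ∧ (∃ x, f x ≠ ⊤) ∧ LowerSemicontinuous f ∧ Convex ℝ (epi f)

/-- Effective domain. -/
def edom {E : Type*} (f : E → EReal) : Set E := {x | f x ≠ ⊤}

/-- Recession function of a proper lsc convex function: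
`rec f x = sup_{y ∈ dom f} (f (y + x) - f y)`. -/
noncomputable def recFn {E : Type*} [AddCommGroup E] (f : E → EReal) (x : E) : EReal :=
  ⨆ (y : E) (_ : f y ≠ ⊤), f (y + x) - f y

/-- Perspective of `f`. -/
noncomputable def persp {E : Type*} [AddCommGroup E] [Module ℝ E] (f : E → EReal) :
    E × ℝ → EReal := fun p =>
  if 0 < p.2 then (p.2 : EReal) * f (p.2⁻¹ • p.1)
  else if p.2 = 0 then recFn f p.1
  else ⊤

/-- `p` is the proximal point `prox_{γ f} x`, i.e. the minimizer of
`γ f(y) + ½‖x - y‖²`. -/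
def IsProx {H : Type*} [NormedAddCommGroup H] (f : H → EReal) (γ : ℝ) (x p : H) : Prop :=
  ∀ y : H, (γ : EReal) * f p + ((‖x - p‖ ^ 2 / 2 : ℝ) : EReal)
    ≤ (γ : EReal) * f y + ((‖x - y‖ ^ 2 / 2 : ℝ) : EReal)

/-- `p` is the metric projection of `x` onto `C`. -/
def IsProj {H : Type*} [NormedAddCommGroup H] (C : Set H) (x p : H) : Prop :=
  p ∈ C ∧ ∀ y ∈ C, ‖x - p‖ ≤ ‖x - y‖

/-- Proximity operator on `H ⊕ ℝ` (with the Hilbert direct-sum norm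
`‖(x,η)‖² = ‖x‖² + η²`). -/
def IsProx2 {H : Type*} [NormedAddCommGroup H] (F : H × ℝ → EReal) (γ : ℝ)
    (x : H) (η : ℝ) (p : H) (μ : ℝ) : Prop :=
  ∀ (y : H) (ν : ℝ),
    (γ : EReal) * F (p, μ) + (((‖x - p‖ ^ 2 + (η - μ) ^ 2) / 2 : ℝ) : EReal)
      ≤ (γ : EReal) * F (y, ν) + (((‖x - y‖ ^ 2 + (η - ν) ^ 2) / 2 : ℝ) : EReal)

/-- Fenchel conjugate on `H ⊕ ℝ` with `⟪(x,η),(u,χ)⟫ = ⟪x,u⟫ + ηχ`. -/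
noncomputable def fenchel2 {H : Type*} [NormedAddCommGroup H] [InnerProductSpace ℝ H]
    (F : H × ℝ → EReal) (u : H) (χ : ℝ) : EReal :=
  ⨆ p : H × ℝ, ((⟪p.1, u⟫ + p.2 * χ : ℝ) : EReal) - F p

/-- Support function of a set. -/
noncomputable def suppFn {H : Type*} [NormedAddCommGroup H] [InnerProductSpace ℝ H]
    (C : Set H) (u : H) : EReal :=
  ⨆ x ∈ C, ((⟪x, u⟫ : ℝ) : EReal)


private lemma ereal_exists_real {e : EReal} (h1 : e ≠ ⊤) (h2 : e ≠ ⊥) : ∃ a : ℝ, e = a :=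
  ⟨e.toReal, (EReal.coe_toReal h1 h2).symm⟩


/-- the Fenchel conjugate of the perspective of `f` is the
indicator of `C = {(x,η) : η + f*(x) ≤ 0}`. -/
theorem persp_conj_eq_indicator {H : Type*} [NormedAddCommGroup H]
    [InnerProductSpace ℝ H] (f : H → EReal) (hf : ProperLscConvex f)
    (u : H) (χ : ℝ) :
    fenchel2 (persp f) u χ = if (χ : EReal) + fenchel f u ≤ 0 then 0 else ⊤ := by
  obtain ⟨hbot, ⟨x0, hx0⟩, -, -⟩ := hf
  obtain ⟨a0, ha0⟩ := ereal_exists_real hx0 (hbot x0)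
  have hsup : ∀ z : H, ((⟪z, u⟫ : ℝ) : EReal) - f z ≤ fenchel f u := fun z => by unfold fenchel; exact le_iSup (fun x : H => ((⟪x, u⟫ : ℝ) : EReal) - f x) z
  -- recFn f 0 = 0
  have hrec0 : recFn f 0 = 0 := by
    apply le_antisymm
    · refine iSup_le fun y => iSup_le fun hy => ?_
      obtain ⟨a, ha⟩ := ereal_exists_real hy (hbot y)
      rw [add_zero, ha, ← EReal.coe_sub, sub_self, EReal.coe_zero]
    · have h1 : f (x0 + 0) - f x0 ≤ recFn f 0 := le_iSup₂ (f := fun y (_ : f y ≠ ⊤) => f (y + 0) - f y) x0 hx0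
      rw [add_zero, ha0, ← EReal.coe_sub, sub_self, EReal.coe_zero] at h1
      exact h1
  by_cases h : (χ : EReal) + fenchel f u ≤ 0
  · rw [if_pos h]
    -- fenchel f u is finite
    have hFtop : fenchel f u ≠ ⊤ := by
      intro ht
      rw [ht, EReal.add_top_of_ne_bot (EReal.coe_ne_bot χ)] at h
      exact (not_le.2 (lt_of_lt_of_le EReal.zero_lt_top le_top)) (le_trans le_top h) |>.elim
    have hFbot : fenchel f u ≠ ⊥ := by
      intro hb
      have := hsup x0
      rw [hb, le_bot_iff, ha0, ← EReal.coe_sub] at this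
      exact EReal.coe_ne_bot _ this
    obtain ⟨s, hs⟩ := ereal_exists_real hFtop hFbot
    have hχs : χ + s ≤ 0 := by
      rw [hs, ← EReal.coe_add] at h
      exact_mod_cast h
    have hkey : ∀ z : H, ∀ a : ℝ, f z = a → ⟪z, u⟫ - a ≤ s := by
      intro z a ha
      have := hsup z
      rw [ha, hs, ← EReal.coe_sub] at this
      exact_mod_cast this
    apply le_antisymm
    · refine iSup_le fun p => ?_
      obtain ⟨x, η⟩ := p
      rcases lt_trichotomy 0 η with hη | hη | hη
      · -- η > 0
        simp only [persp, hη, if_pos]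
        set z := η⁻¹ • x with hz
        have hxz : ⟪x, u⟫ = η * ⟪z, u⟫ := by
          rw [hz, real_inner_smul_left]
          field_simp
        by_cases hfz : f z = ⊤
        · rw [hfz, EReal.mul_top_of_pos (by exact_mod_cast hη), EReal.sub_top]
          exact bot_le
        · obtain ⟨a, ha⟩ := ereal_exists_real hfz (hbot z)
          have haz := hkey z a ha
          rw [ha, ← EReal.coe_mul, ← EReal.coe_sub, ← EReal.coe_zero, EReal.coe_le_coe_iff]
          nlinarith [hxz]
      · -- η = 0
        subst hη
        have hpx : persp f (x, (0:ℝ)) = recFn f x := by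
          simp [persp]
        rw [hpx, zero_mul, add_zero]
        by_cases hT : recFn f x = ⊤
        · rw [hT, EReal.sub_top]; exact bot_le
        have hB : recFn f x ≠ ⊥ := by
          intro hb
          have h1 : f (x0 + x) - f x0 ≤ recFn f x :=
            le_iSup₂ (f := fun y (_ : f y ≠ ⊤) => f (y + x) - f y) x0 hx0
          rw [hb, le_bot_iff, ha0] at h1
          rcases eq_or_ne (f (x0 + x)) ⊤ with hT' | hT'
          · rw [hT', EReal.top_sub_coe] at h1; exact top_ne_bot h1
          · obtain ⟨b, hbeq⟩ := ereal_exists_real hT' (hbot (x0 + x))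
            rw [hbeq, ← EReal.coe_sub] at h1
            exact EReal.coe_ne_bot _ h1
        obtain ⟨t, ht⟩ := ereal_exists_real hT hB
        have hFle : fenchel f u ≤ ((t + s - ⟪x, u⟫ : ℝ) : EReal) := by
          unfold fenchel
          refine iSup_le fun y => ?_
          rcases eq_or_ne (f y) ⊤ with hy | hy
          · rw [hy, EReal.sub_top]; exact bot_le
          obtain ⟨a, ha⟩ := ereal_exists_real hy (hbot y)
          have hb2 : f (y + x) - f y ≤ recFn f x :=
            le_iSup₂ (f := fun y (_ : f y ≠ ⊤) => f (y + x) - f y) y hy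
          rw [ht, ha] at hb2
          rcases eq_or_ne (f (y + x)) ⊤ with hyx | hyx
          · rw [hyx, EReal.top_sub_coe] at hb2
            exact absurd (top_le_iff.mp hb2) (EReal.coe_ne_top t)
          obtain ⟨b, hbeq⟩ := ereal_exists_real hyx (hbot (y + x))
          rw [hbeq, ← EReal.coe_sub, EReal.coe_le_coe_iff] at hb2
          have hkb := hkey (y + x) b hbeq
          rw [inner_add_left] at hkb
          rw [ha, ← EReal.coe_sub, EReal.coe_le_coe_iff]
          linarith
        rw [hs, EReal.coe_le_coe_iff] at hFle
        rw [ht, ← EReal.coe_sub, ← EReal.coe_zero, EReal.coe_le_coe_iff]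
        linarith
      · -- η < 0
        simp only [persp]
        rw [if_neg (by simpa using not_lt.2 hη.le), if_neg (by exact ne_of_lt hη), EReal.sub_top]
        exact bot_le
    · have h0 : ((⟪(0:H), u⟫ + (0:ℝ) * χ : ℝ) : EReal) - persp f (0, 0) ≤ fenchel2 (persp f) u χ :=
        le_iSup (fun p : H × ℝ => ((⟪p.1, u⟫ + p.2 * χ : ℝ) : EReal) - persp f p) ((0 : H), (0 : ℝ))
      have hp00 : persp f ((0:H), (0:ℝ)) = 0 := by
        simp only [persp, lt_irrefl, if_false, if_pos rfl]
        exact hrec0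
      rw [hp00, inner_zero_left, zero_mul, add_zero, EReal.coe_zero, sub_zero] at h0
      exact h0
  · rw [if_neg h]
    rw [EReal.eq_top_iff_forall_lt]
    intro c
    -- get z with -χ < ⟪z,u⟫ - f z
    have hlt : ((-χ : ℝ) : EReal) < fenchel f u := by
      by_contra hle
      push_neg at hle
      apply h
      calc (χ : EReal) + fenchel f u ≤ (χ : EReal) + ((-χ : ℝ) : EReal) :=
            add_le_add le_rfl hle
        _ = ((χ + -χ : ℝ) : EReal) := by rw [EReal.coe_add]
        _ = 0 := by norm_num
    rw [fenchel, lt_iSup_iff] at hlt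
    obtain ⟨z, hz⟩ := hlt
    have hfz : f z ≠ ⊤ := by
      intro ht
      rw [ht, EReal.sub_top] at hz
      exact (not_lt_bot hz)
    obtain ⟨r, hr⟩ := ereal_exists_real hfz (hbot z)
    rw [hr, ← EReal.coe_sub, EReal.coe_lt_coe_iff] at hz
    set δ : ℝ := ⟪z, u⟫ + χ - r with hδ
    have hδpos : 0 < δ := by simp only [hδ]; linarith
    set t : ℝ := max 1 ((c + 1) / δ) with ht
    have htpos : 0 < t := lt_of_lt_of_le one_pos (le_max_left _ _)
    have htc : c < t * δ := by
      have : (c + 1) / δ ≤ t := le_max_right _ _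
      have h2 : (c + 1) / δ * δ ≤ t * δ := mul_le_mul_of_nonneg_right this hδpos.le
      rw [div_mul_cancel₀ _ (ne_of_gt hδpos)] at h2
      linarith
    have hle : ((⟪(t • z : H), u⟫ + t * χ : ℝ) : EReal) - persp f (t • z, t) ≤ fenchel2 (persp f) u χ :=
      le_iSup (fun p : H × ℝ => ((⟪p.1, u⟫ + p.2 * χ : ℝ) : EReal) - persp f p) ((t • z : H), t)
    have hpt : persp f (t • z, t) = ((t * r : ℝ) : EReal) := by
      simp only [persp, htpos, if_pos]
      rw [smul_smul, inv_mul_cancel₀ (ne_of_gt htpos), one_smul, hr, EReal.coe_mul]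
    rw [hpt, real_inner_smul_left, ← EReal.coe_sub] at hle
    refine lt_of_lt_of_le ?_ hle
    rw [EReal.coe_lt_coe_iff]
    have : t * ⟪z, u⟫ + t * χ - t * r = t * δ := by ring
    linarith [this ▸ htc]
end

section
/- Let f be a proper lower semicontinuous convex function on a real Hilbert space H, γ > 0, and x ∈ H. If P denotes the metric projection of x onto the closure of dom f, then f(prox_{γf}(x)) ≤ f(P). -/
open scoped RealInnerProductSpace
open Filter Topology

/-- `f(prox_{γ f} x) ≤ f(P_{cl dom f} x)`. -/
theorem f_prox_le_f_proj {H : Type*} [NormedAddCommGroup H] [InnerProductSpace ℝ H]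
    (f : H → EReal) (hf : ProperLscConvex f) (γ : ℝ) (hγ : 0 < γ) (x p P : H)
    (hp : IsProx f γ x p) (hP : IsProj (closure (edom f)) x P) :
    f p ≤ f P := by
  obtain ⟨hbot, ⟨y0, hy0⟩, _, _⟩ := hf
  -- f p ≠ ⊤
  have hpne : f p ≠ ⊤ := by
    intro h
    have h1 := hp y0
    rw [h] at h1
    have hγtop : (γ : EReal) * (⊤ : EReal) = ⊤ := by
      rw [EReal.mul_top_of_pos]; exact_mod_cast hγ
    rw [hγtop, EReal.top_add_of_ne_bot (by exact_mod_cast EReal.coe_ne_bot _)] at h1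
    lift f y0 to ℝ using ⟨hy0, hbot y0⟩ with r hr
    rw [← EReal.coe_mul, ← EReal.coe_add] at h1
    exact (EReal.coe_lt_top _).not_ge h1
  by_cases hPtop : f P = ⊤
  · rw [hPtop]; exact le_top
  -- lift to reals
  lift f p to ℝ using ⟨hpne, hbot p⟩ with a ha
  lift f P to ℝ using ⟨hPtop, hbot P⟩ with b hb
  have hmem : p ∈ closure (edom f) := subset_closure (show f p ≠ ⊤ from ha ▸ hpne)
  have hdist : ‖x - P‖ ≤ ‖x - p‖ := hP.2 p hmem
  have h1 := hp P
  rw [← ha, ← hb, ← EReal.coe_mul, ← EReal.coe_mul, ← EReal.coe_add, ← EReal.coe_add,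
    EReal.coe_le_coe_iff] at h1
  have key : γ * a ≤ γ * b := by
    have h2 : ‖x - P‖ ^ 2 / 2 ≤ ‖x - p‖ ^ 2 / 2 := by
      have := pow_le_pow_left₀ (norm_nonneg _) hdist 2
      linarith
    linarith
  exact EReal.coe_le_coe_iff.mpr (le_of_mul_le_mul_left key hγ)
end

section
/- Let f be a proper lower semicontinuous convex function on a real Hilbert space H, γ > 0, and (x,η) ∈ H × ℝ. If η + γ f*(x/γ) ≤ 0 then prox_{γ𝑓̃}(x,η) = (0,0). -/
open scoped RealInnerProductSpace
open Filter Topology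

section aux
set_option linter.unusedSectionVars false

variable {H : Type*} [NormedAddCommGroup H] [InnerProductSpace ℝ H]

lemma fenchel_FY (f : H → EReal) (u z : H) :
    ((⟪z, u⟫ : ℝ) : EReal) - f z ≤ fenchel f u :=
  le_iSup (fun w => ((⟪w, u⟫ : ℝ) : EReal) - f w) z

lemma recFn_zero (f : H → EReal) (hbot : ∀ x, f x ≠ ⊥) (htop : ∃ x, f x ≠ ⊤) :
    recFn f 0 = 0 := by
  obtain ⟨z, hz⟩ := htop
  apply le_antisymm
  · apply iSup_le; intro y; apply iSup_le; intro hy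
    rw [add_zero, ← EReal.coe_toReal hy (hbot y), ← EReal.coe_sub]
    simp
  · have h0 : (0:EReal) = f (z + 0) - f z := by
      rw [add_zero, ← EReal.coe_toReal hz (hbot z), ← EReal.coe_sub]; simp
    rw [h0]
    exact le_iSup₂ (f := fun y (_ : f y ≠ ⊤) => f (y + 0) - f y) z hz

lemma recFn_ge (f : H → EReal) (hbot : ∀ x, f x ≠ ⊥) (u : H) (c : ℝ)
    (hc : fenchel f u = (c : EReal)) (y : H) :
    ((⟪y, u⟫ : ℝ) : EReal) ≤ recFn f y := by
  by_contra hlt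
  push_neg at hlt
  obtain ⟨t, ht1, ht2⟩ := EReal.exists_between_coe_real hlt
  have htR : t < ⟪y, u⟫ := EReal.coe_lt_coe_iff.1 ht2
  set ε : ℝ := ⟪y, u⟫ - t with hε
  have hεpos : 0 < ε := by simp [hε]; linarith
  have hcε : ((c - ε : ℝ) : EReal) < fenchel f u := by
    rw [hc]; exact_mod_cast by linarith
  rw [fenchel, lt_iSup_iff] at hcε
  obtain ⟨z, hz⟩ := hcε
  have hzt : f z ≠ ⊤ := by
    intro h
    rw [h] at hz
    have : ((⟪z, u⟫ : ℝ) : EReal) - ⊤ = ⊥ := rfl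
    rw [this] at hz
    exact absurd hz (by simp)
  set s : ℝ := (f z).toReal with hs
  have hfz : f z = (s : EReal) := (EReal.coe_toReal hzt (hbot z)).symm
  rw [hfz, ← EReal.coe_sub, EReal.coe_lt_coe_iff] at hz
  have hterm : f (z + y) - f z ≤ recFn f y :=
    le_iSup₂ (f := fun w (_ : f w ≠ ⊤) => f (w + y) - f w) z hzt
  have hzyt : f (z + y) ≠ ⊤ := by
    intro h
    rw [h, hfz, EReal.top_sub_coe] at hterm
    exact absurd (hterm.trans ht1.le) (by simp)
  set r : ℝ := (f (z + y)).toReal with hr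
  have hfzy : f (z + y) = (r : EReal) := (EReal.coe_toReal hzyt (hbot _)).symm
  have hFY : ((⟪z + y, u⟫ : ℝ) : EReal) - f (z + y) ≤ fenchel f u := fenchel_FY f u (z + y)
  rw [hfzy, hc, ← EReal.coe_sub, EReal.coe_le_coe_iff] at hFY
  rw [hfzy, hfz, ← EReal.coe_sub] at hterm
  have htR2 : r - s ≤ t := EReal.coe_le_coe_iff.1 (hterm.trans ht1.le)
  rw [inner_add_left] at hFY
  linarith
end aux


/-- if `η + γ f*(x/γ) ≤ 0` then `prox_{γ f̃}(x,η) = (0,0)`. -/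
theorem prox_persp_eq_zero_of_nonpos {H : Type*} [NormedAddCommGroup H]
    [InnerProductSpace ℝ H] (f : H → EReal) (hf : ProperLscConvex f)
    (γ : ℝ) (hγ : 0 < γ) (x : H) (η : ℝ)
    (hle : (η : EReal) + (γ : EReal) * fenchel f (γ⁻¹ • x) ≤ 0) :
    IsProx2 (persp f) γ x η 0 0 := by
  obtain ⟨hbot, htop, _, _⟩ := hf
  intro y ν
  -- the value at (0,0)
  have hP0 : persp f (0, 0) = 0 := by
    simp only [persp]
    norm_num
    exact recFn_zero f hbot htop
  rw [hP0, mul_zero, zero_add]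
  -- fenchel value is a real number c
  have hγE : (0 : EReal) < (γ : EReal) := by exact_mod_cast hγ
  have hfen_top : fenchel f (γ⁻¹ • x) ≠ ⊤ := by
    intro h
    rw [h, EReal.mul_top_of_pos hγE] at hle
    have : (η : EReal) + ⊤ = ⊤ := by
      rw [EReal.add_top_iff_ne_bot]; simp
    rw [this] at hle
    exact absurd hle (by simp)
  have hfen_bot : fenchel f (γ⁻¹ • x) ≠ ⊥ := by
    obtain ⟨z, hz⟩ := htop
    have hfz : f z = ((f z).toReal : EReal) := (EReal.coe_toReal hz (hbot z)).symm
    have := fenchel_FY f (γ⁻¹ • x) z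
    rw [hfz, ← EReal.coe_sub] at this
    intro h
    rw [h] at this
    exact EReal.coe_ne_bot _ (le_bot_iff.1 this)
  set c : ℝ := (fenchel f (γ⁻¹ • x)).toReal with hcdef
  have hc : fenchel f (γ⁻¹ • x) = (c : EReal) := (EReal.coe_toReal hfen_top hfen_bot).symm
  have hηc : η + γ * c ≤ 0 := by
    rw [hc, ← EReal.coe_mul, ← EReal.coe_add] at hle
    exact_mod_cast hle
  rcases lt_trichotomy ν 0 with hν | hν | hν
  · -- ν < 0 : perspective is ⊤
    have : persp f (y, ν) = ⊤ := by
      simp only [persp]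
      rw [if_neg (by simpa using not_lt.2 hν.le), if_neg hν.ne]
    rw [this, EReal.mul_top_of_pos hγE, EReal.top_add_coe]
    exact le_top
  · -- ν = 0 : perspective is recFn f y
    subst hν
    have hPy : persp f (y, 0) = recFn f y := by simp [persp]
    rw [hPy]
    have hkey := recFn_ge f hbot (γ⁻¹ • x) c hc y
    rw [real_inner_smul_right] at hkey
    rcases eq_or_ne (recFn f y) ⊤ with hT | hT
    · rw [hT, EReal.mul_top_of_pos hγE, EReal.top_add_coe]
      exact le_top
    · have hB : recFn f y ≠ ⊥ := by
        intro h; rw [h] at hkey; exact EReal.coe_ne_bot _ (le_bot_iff.1 hkey)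
      set t : ℝ := (recFn f y).toReal with htdef
      have ht : recFn f y = (t : EReal) := (EReal.coe_toReal hT hB).symm
      rw [ht] at hkey ⊢
      have hkeyR : γ⁻¹ * ⟪y, x⟫ ≤ t := EReal.coe_le_coe_iff.1 hkey
      rw [← EReal.coe_mul, ← EReal.coe_add, EReal.coe_le_coe_iff]
      have hyx : ⟪y, x⟫ ≤ γ * t := by
        have h2 := mul_le_mul_of_nonneg_left hkeyR hγ.le
        have h3 : γ * (γ⁻¹ * ⟪y, x⟫) = ⟪y, x⟫ := by field_simp
        linarith
      have hx0 : x - 0 = x := by simp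
      rw [hx0, norm_sub_sq_real x y]
      have hcomm : ⟪y, x⟫ = ⟪x, y⟫ := real_inner_comm x y
      nlinarith [sq_nonneg ‖y‖]
  · -- ν > 0
    have hPy : persp f (y, ν) = (ν : EReal) * f (ν⁻¹ • y) := by
      simp only [persp]; rw [if_pos hν]
    rw [hPy]
    set u : H := ν⁻¹ • y with hu
    rcases eq_or_ne (f u) ⊤ with hT | hT
    · rw [hT, EReal.mul_top_of_pos (by exact_mod_cast hν), EReal.mul_top_of_pos hγE,
        EReal.top_add_coe]
      exact le_top
    · set r : ℝ := (f u).toReal with hrdef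
      have hfu : f u = (r : EReal) := (EReal.coe_toReal hT (hbot u)).symm
      have hFY := fenchel_FY f (γ⁻¹ • x) u
      rw [hfu, hc, ← EReal.coe_sub, EReal.coe_le_coe_iff] at hFY
      rw [hu, real_inner_smul_left, real_inner_smul_right] at hFY
      rw [hfu, ← EReal.coe_mul, ← EReal.coe_mul, ← EReal.coe_add, EReal.coe_le_coe_iff]
      -- hFY : ν⁻¹ * (γ⁻¹ * ⟪y, x⟫) - r ≤ c
      have h1 : ⟪y, x⟫ ≤ γ * ν * (c + r) := by
        have key : ⟪y, x⟫ = (γ * ν) * (ν⁻¹ * (γ⁻¹ * ⟪y, x⟫)) := by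
          field_simp
        rw [key]
        exact mul_le_mul_of_nonneg_left (by linarith) (mul_pos hγ hν).le
      have h2 : ν * (η + γ * c) ≤ 0 := mul_nonpos_of_nonneg_of_nonpos hν.le hηc
      have hx0 : x - 0 = x := by simp
      rw [hx0, norm_sub_sq_real x y]
      nlinarith [sq_nonneg ‖y‖, sq_nonneg ν, real_inner_comm y x]
end

section
/- Let f : H → ℝ be f(x) = ½‖x‖² on a real Hilbert space H, γ > 0, and (x,η) ∈ H × ℝ with η + ‖x‖²/(2γ) > 0 and x ≠ 0. Then there is a unique μ > 0 with μ = η + γ‖x‖²/(2(γ+μ)²), and prox_{γ𝑓̃}(x,η) = ((μ/(γ+μ)) x, μ). -/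
open scoped RealInnerProductSpace
open Filter Topology

section Aux
variable {H : Type*} [NormedAddCommGroup H] [InnerProductSpace ℝ H]

omit [InnerProductSpace ℝ H] in
lemma recFn_sq_zero : recFn (fun z : H => ((‖z‖ ^ 2 / 2 : ℝ) : EReal)) 0 = 0 := by
  unfold recFn
  simp only [ne_eq, EReal.coe_ne_top, not_false_eq_true, iSup_pos, add_zero, ← EReal.coe_sub,
    sub_self, EReal.coe_zero, iSup_const]

lemma recFn_sq_ne_zero (y : H) (hy : y ≠ 0) :
    recFn (fun z : H => ((‖z‖ ^ 2 / 2 : ℝ) : EReal)) y = ⊤ := by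
  unfold recFn
  simp only [ne_eq, EReal.coe_ne_top, not_false_eq_true, iSup_pos]
  rw [iSup_eq_top]
  intro b hb
  have hy0 : ‖y‖ ≠ 0 := norm_ne_zero_iff.2 hy
  have hy2 : 0 < ‖y‖ ^ 2 := by positivity
  induction b with
  | bot => exact ⟨0, by simp [← EReal.coe_sub]⟩
  | coe r =>
    refine ⟨(r / ‖y‖ ^ 2) • y, ?_⟩
    have h1 : (r / ‖y‖ ^ 2) • y + y = (r / ‖y‖ ^ 2 + 1) • y := by
      rw [add_smul, one_smul]
    rw [h1, ← EReal.coe_sub, EReal.coe_lt_coe_iff]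
    rw [norm_smul, norm_smul, mul_pow, mul_pow]
    simp only [Real.norm_eq_abs, sq_abs]
    have : (r / ‖y‖ ^ 2 + 1) ^ 2 * ‖y‖ ^ 2 / 2 - (r / ‖y‖ ^ 2) ^ 2 * ‖y‖ ^ 2 / 2
        = r + ‖y‖ ^ 2 / 2 := by
      field_simp
      ring
    rw [this]
    linarith
  | top => exact absurd hb (lt_irrefl _)

lemma persp_sq_pos (y : H) (ν : ℝ) (hν : 0 < ν) :
    persp (fun z : H => ((‖z‖ ^ 2 / 2 : ℝ) : EReal)) (y, ν)
      = ((‖y‖ ^ 2 / (2 * ν) : ℝ) : EReal) := by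
  unfold persp
  simp only [if_pos hν, ← EReal.coe_mul]
  congr 1
  rw [norm_smul, mul_pow, Real.norm_eq_abs, sq_abs]
  field_simp

end Aux

lemma step1 (γ ν a b : ℝ) (hγ : 0 < γ) (hν : 0 < ν) :
    γ * a ^ 2 / (2 * (γ + ν)) ≤ γ * (b ^ 2 / (2 * ν)) + (a - b) ^ 2 / 2 := by
  have h1 : 0 < γ + ν := by linarith
  have key : γ * (b ^ 2 / (2 * ν)) + (a - b) ^ 2 / 2 - γ * a ^ 2 / (2 * (γ + ν))
      = ((γ + ν) * b - ν * a) ^ 2 / (2 * ν * (γ + ν)) := by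
    field_simp
    ring
  nlinarith [div_nonneg (sq_nonneg ((γ + ν) * b - ν * a)) (mul_pos (mul_pos two_pos hν) h1).le]

lemma step2 (γ η μ ν a : ℝ) (hγ : 0 < γ) (hμ : 0 < μ) (hν : 0 ≤ ν)
    (heq : μ = η + γ * a ^ 2 / (2 * (γ + μ) ^ 2)) :
    γ * a ^ 2 / (2 * (γ + μ)) + (η - μ) ^ 2 / 2
      ≤ γ * a ^ 2 / (2 * (γ + ν)) + (η - ν) ^ 2 / 2 := by
  have h1 : 0 < γ + μ := by linarith
  have h2 : 0 < γ + ν := by linarith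
  have hη : η = μ - γ * a ^ 2 / (2 * (γ + μ) ^ 2) := by linarith
  subst hη
  have hd : (γ * a ^ 2 / (2 * (γ + ν)) + (μ - γ * a ^ 2 / (2 * (γ + μ) ^ 2) - ν) ^ 2 / 2)
      - (γ * a ^ 2 / (2 * (γ + μ)) + (μ - γ * a ^ 2 / (2 * (γ + μ) ^ 2) - μ) ^ 2 / 2)
      = (μ - ν) ^ 2 * (γ * a ^ 2 / (2 * (γ + ν) * (γ + μ) ^ 2) + 1 / 2) := by
    field_simp
    ring
  nlinarith [mul_nonneg (sq_nonneg (μ - ν))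
    (by positivity : (0:ℝ) ≤ γ * a ^ 2 / (2 * (γ + ν) * (γ + μ) ^ 2) + 1 / 2)]

/-- for `f = ½‖·‖²`, if `η + ‖x‖²/(2γ) > 0` and `x ≠ 0`, there
is a unique `μ > 0` with `μ = η + γ‖x‖²/(2(γ+μ)²)`, and
`prox_{γ f̃}(x,η) = ((μ/(γ+μ)) x, μ)`. -/
theorem prox_persp_sq_of_pos {H : Type*} [NormedAddCommGroup H]
    [InnerProductSpace ℝ H] (γ : ℝ) (hγ : 0 < γ) (x : H) (η : ℝ)
    (hx : x ≠ 0) (hpos : 0 < η + ‖x‖ ^ 2 / (2 * γ)) :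
    (∃! μ : ℝ, 0 < μ ∧ μ = η + γ * ‖x‖ ^ 2 / (2 * (γ + μ) ^ 2)) ∧
    ∀ μ : ℝ, 0 < μ → μ = η + γ * ‖x‖ ^ 2 / (2 * (γ + μ) ^ 2) →
      IsProx2 (persp fun y : H => ((‖y‖ ^ 2 / 2 : ℝ) : EReal)) γ x η
        ((μ / (γ + μ)) • x) μ := by
  have hxn : ‖x‖ ≠ 0 := norm_ne_zero_iff.2 hx
  have hn : 0 < ‖x‖ ^ 2 := by positivity
  constructor
  · -- existence and uniqueness
    set n := ‖x‖ ^ 2 with hn_def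
    set M : ℝ := η + n / (2 * γ) + 1 with hM_def
    have hM0 : (0:ℝ) ≤ M := by simp only [hM_def]; linarith
    set g : ℝ → ℝ := fun t => t - η - γ * n / (2 * (γ + t) ^ 2) with hg_def
    have hcont : ContinuousOn g (Set.Icc 0 M) := by
      apply ContinuousOn.sub
      · exact (continuousOn_id.sub continuousOn_const)
      · apply ContinuousOn.div continuousOn_const
        · fun_prop
        · intro t ht
          have := ht.1
          positivity
    have hg0 : g 0 < 0 := by
      have h1 : γ * n / (2 * (γ + 0) ^ 2) = n / (2 * γ) := by
        field_simp; ring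
      simp only [hg_def, h1]
      linarith
    have hgM : 0 < g M := by
      have h1 : γ ^ 2 ≤ (γ + M) ^ 2 := by nlinarith
      have h2 : γ * n / (2 * (γ + M) ^ 2) ≤ γ * n / (2 * γ ^ 2) :=
        div_le_div_of_nonneg_left (by positivity) (by positivity) (by linarith)
      have h3 : γ * n / (2 * γ ^ 2) = n / (2 * γ) := by field_simp
      simp only [hg_def]
      rw [h3] at h2
      simp only [hM_def]
      linarith
    obtain ⟨μ, hμmem, hgμ⟩ := intermediate_value_Icc hM0 hcont ⟨hg0.le, hgM.le⟩
    have hμpos : 0 < μ := by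
      rcases hμmem.1.eq_or_lt with h | h
      · exfalso; rw [← h] at hgμ; rw [hgμ] at hg0; exact lt_irrefl _ hg0
      · exact h
    have heq : μ = η + γ * n / (2 * (γ + μ) ^ 2) := by
      have : μ - η - γ * n / (2 * (γ + μ) ^ 2) = 0 := hgμ
      linarith
    refine ⟨μ, ⟨hμpos, heq⟩, ?_⟩
    rintro μ' ⟨hμ'pos, heq'⟩
    have h1 : 0 < γ + μ := by linarith
    have h1' : 0 < γ + μ' := by linarith
    have e1 : μ - η = γ * n / (2 * (γ + μ) ^ 2) := by linarith
    have e2 : (μ - η) * (2 * (γ + μ) ^ 2) = γ * n := by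
      rw [e1]; field_simp
    have e1' : μ' - η = γ * n / (2 * (γ + μ') ^ 2) := by linarith
    have e2' : (μ' - η) * (2 * (γ + μ') ^ 2) = γ * n := by
      rw [e1']; field_simp
    have key : (μ - μ') * (2 * (γ + μ) ^ 2 * (γ + μ') ^ 2 + γ * n * (2 * γ + μ + μ')) = 0 := by
      linear_combination (γ + μ') ^ 2 * e2 - (γ + μ) ^ 2 * e2'
    have hpos2 : 0 < 2 * (γ + μ) ^ 2 * (γ + μ') ^ 2 + γ * n * (2 * γ + μ + μ') := by
      have hgn : 0 < γ * n := by positivity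
      nlinarith [pow_pos h1 2, pow_pos h1' 2]
    have := (mul_eq_zero.mp key).resolve_right (ne_of_gt hpos2)
    linarith
  · -- prox formula
    intro μ hμ heq
    have hγμ : 0 < γ + μ := by linarith
    intro y ν
    set p : H := (μ / (γ + μ)) • x with hp
    have hpn : ‖p‖ ^ 2 = (μ / (γ + μ)) ^ 2 * ‖x‖ ^ 2 := by
      rw [hp, norm_smul, mul_pow, Real.norm_eq_abs, sq_abs]
    have hxp : x - p = (γ / (γ + μ)) • x := by
      rw [hp, show x - (μ / (γ + μ)) • x = (1 - μ / (γ + μ)) • x by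
        rw [sub_smul, one_smul]]
      congr 1
      field_simp
      ring
    have hxpn : ‖x - p‖ ^ 2 = (γ / (γ + μ)) ^ 2 * ‖x‖ ^ 2 := by
      rw [hxp, norm_smul, mul_pow, Real.norm_eq_abs, sq_abs]
    set L : ℝ := γ * (‖p‖ ^ 2 / (2 * μ)) + (‖x - p‖ ^ 2 + (η - μ) ^ 2) / 2 with hL_def
    have hL : (γ : EReal) * persp (fun z : H => ((‖z‖ ^ 2 / 2 : ℝ) : EReal)) (p, μ)
        + (((‖x - p‖ ^ 2 + (η - μ) ^ 2) / 2 : ℝ) : EReal) = ((L : ℝ) : EReal) := by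
      rw [persp_sq_pos p μ hμ, ← EReal.coe_mul, ← EReal.coe_add]
    have hLval : L = γ * ‖x‖ ^ 2 / (2 * (γ + μ)) + (η - μ) ^ 2 / 2 := by
      rw [hL_def, hpn, hxpn]
      field_simp
      ring
    rcases lt_trichotomy 0 ν with hν | hν | hν
    · -- ν > 0
      rw [hL, persp_sq_pos y ν hν, ← EReal.coe_mul, ← EReal.coe_add, EReal.coe_le_coe_iff]
      have s1 := step1 γ ν ‖x‖ ‖y‖ hγ hν
      have s2 := step2 γ η μ ν ‖x‖ hγ hμ hν.le heq
      have habs : (‖x‖ - ‖y‖) ^ 2 ≤ ‖x - y‖ ^ 2 := by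
        have h := abs_norm_sub_norm_le x y
        calc (‖x‖ - ‖y‖) ^ 2 = |‖x‖ - ‖y‖| ^ 2 := (sq_abs _).symm
          _ ≤ ‖x - y‖ ^ 2 := pow_le_pow_left₀ (abs_nonneg _) h 2
      rw [hLval]
      linarith
    · -- ν = 0
      subst hν
      by_cases hy : y = 0
      · subst hy
        have hP0 : persp (fun z : H => ((‖z‖ ^ 2 / 2 : ℝ) : EReal)) ((0 : H), (0 : ℝ))
            = 0 := by
          simp only [persp, lt_irrefl, if_neg (lt_irrefl (0:ℝ)), if_pos rfl]
          exact recFn_sq_zero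
        rw [hL, hP0, mul_zero, zero_add, EReal.coe_le_coe_iff]
        have s2 := step2 γ η μ 0 ‖x‖ hγ hμ le_rfl heq
        have h0 : γ * ‖x‖ ^ 2 / (2 * (γ + 0)) = ‖x‖ ^ 2 / 2 := by
          field_simp; ring
        rw [hLval]
        rw [h0] at s2
        rw [sub_zero]
        linarith
      · have hP0 : persp (fun z : H => ((‖z‖ ^ 2 / 2 : ℝ) : EReal)) (y, (0 : ℝ))
            = ⊤ := by
          simp only [persp, lt_irrefl, if_neg (lt_irrefl (0:ℝ)), if_pos rfl]
          exact recFn_sq_ne_zero y hy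
        have htop : (γ : EReal) * ⊤ = ⊤ := by
          rw [mul_comm]; exact EReal.top_mul_of_pos (EReal.coe_pos.2 hγ)
        rw [hP0, htop, EReal.top_add_coe]
        exact le_top
    · -- ν < 0
      have hP0 : persp (fun z : H => ((‖z‖ ^ 2 / 2 : ℝ) : EReal)) (y, ν) = ⊤ := by
        simp only [persp]
        rw [if_neg (by linarith), if_neg (by linarith)]
      have htop : (γ : EReal) * ⊤ = ⊤ := by
        rw [mul_comm]; exact EReal.top_mul_of_pos (EReal.coe_pos.2 hγ)
      rw [hP0, htop, EReal.top_add_coe]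
      exact le_top
end

section
/- Let φ : ℝ → ]-∞,+∞] with φ(ξ) = ξ ln ξ for ξ > 0, φ(0) = 0, φ(ξ) = +∞ for ξ < 0, and let τ > 0 and y ∈ ℝ. Then prox_{τφ}(y) = τ · W₀((1/τ) e^{y/τ − 1}), where W₀ is the principal branch of the Lambert W function (the inverse of w ↦ w e^w on [0,∞)). Equivalently, p = prox_{τφ}(y) is the unique p > 0 satisfying y − p = τ(ln p + 1). -/
open scoped RealInnerProductSpace
open Filter Topology

/-- Boltzmann–Shannon entropy: `ξ ln ξ` for `ξ > 0`, `0` at `0`, `+∞` for `ξ < 0`. -/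
noncomputable def ent : ℝ → EReal := fun ξ =>
  if 0 < ξ then ((ξ * Real.log ξ : ℝ) : EReal) else if ξ = 0 then 0 else ⊤

-- strong convexity key inequality
lemma ent_key (τ y q z : ℝ) (hτ : 0 < τ) (hq : 0 < q)
    (heq : y - q = τ * (Real.log q + 1)) (hz : 0 < z) :
    τ * (q * Real.log q) + (y - q) ^ 2 / 2 + (z - q) ^ 2 / 2
      ≤ τ * (z * Real.log z) + (y - z) ^ 2 / 2 := by
  have hlq : τ * Real.log q = y - q - τ := by nlinarith [heq]
  have hlog : Real.log (q / z) ≤ q / z - 1 :=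
    Real.log_le_sub_one_of_pos (div_pos hq hz)
  rw [Real.log_div hq.ne' hz.ne'] at hlog
  -- z * log z - z * log q ≥ z - q
  have h1 : z * Real.log z - z * Real.log q ≥ z - q := by
    have := mul_le_mul_of_nonneg_left hlog hz.le
    rw [mul_sub] at this
    have hz' : z * (q / z) = q := by field_simp
    nlinarith [this]
  have h2 : τ * (z * Real.log z) ≥ τ * (z * Real.log q) + τ * (z - q) := by nlinarith [h1]
  have h3 : τ * (z * Real.log q) = z * (y - q - τ) := by
    calc τ * (z * Real.log q) = z * (τ * Real.log q) := by ring
    _ = z * (y - q - τ) := by rw [hlq]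
  have h4 : τ * (q * Real.log q) = q * (y - q - τ) := by
    calc τ * (q * Real.log q) = q * (τ * Real.log q) := by ring
    _ = q * (y - q - τ) := by rw [hlq]
  nlinarith [h2, h3, h4]

lemma ent_zero_gap (τ y q : ℝ) (hτ : 0 < τ) (hq : 0 < q)
    (heq : y - q = τ * (Real.log q + 1)) :
    τ * (q * Real.log q) + (y - q) ^ 2 / 2 + (q ^ 2 / 2 + τ * q) = y ^ 2 / 2 := by
  have hlq : τ * Real.log q = y - q - τ := by nlinarith [heq]
  have h4 : τ * (q * Real.log q) = q * (y - q - τ) := by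
    calc τ * (q * Real.log q) = q * (τ * Real.log q) := by ring
    _ = q * (y - q - τ) := by rw [hlq]
  nlinarith [h4]

lemma ent_isProx (τ y q : ℝ) (hτ : 0 < τ) (hq : 0 < q)
    (heq : y - q = τ * (Real.log q + 1)) : IsProx ent τ y q := by
  intro z
  have hentq : ent q = ((q * Real.log q : ℝ) : EReal) := by simp [ent, hq]
  rw [hentq]
  rcases lt_trichotomy z 0 with hz | hz | hz
  · have hz' : ent z = ⊤ := by simp [ent, hz.ne, not_lt.mpr hz.le]
    rw [hz', EReal.mul_top_of_pos (by exact_mod_cast hτ), EReal.top_add_coe]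
    exact le_top
  · subst hz
    have : ent 0 = 0 := by simp [ent]
    rw [this, mul_zero, zero_add, ← EReal.coe_mul, ← EReal.coe_add]
    rw [EReal.coe_le_coe_iff]
    simp only [Real.norm_eq_abs, sq_abs, sub_zero]
    have := ent_zero_gap τ y q hτ hq heq
    nlinarith [this, sq_nonneg q]
  · have hz' : ent z = ((z * Real.log z : ℝ) : EReal) := by simp [ent, hz]
    rw [hz', ← EReal.coe_mul, ← EReal.coe_add, ← EReal.coe_mul, ← EReal.coe_add,
      EReal.coe_le_coe_iff]
    simp only [Real.norm_eq_abs, sq_abs]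
    have := ent_key τ y q z hτ hq heq hz
    nlinarith [this, sq_nonneg (z - q)]

lemma ent_exists_root (τ y : ℝ) (hτ : 0 < τ) :
    ∃ q : ℝ, 0 < q ∧ y - q = τ * (Real.log q + 1) := by
  set a := min 1 (Real.exp ((y - τ - 1) / τ)) with ha_def
  set b := max 1 y with hb_def
  have ha0 : 0 < a := lt_min one_pos (Real.exp_pos _)
  have hab : a ≤ b := le_trans (min_le_left _ _) (le_max_left _ _)
  set h : ℝ → ℝ := fun x => x + τ * Real.log x + τ - y with hh
  have hc : ContinuousOn h (Set.Icc a b) := by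
    apply ContinuousOn.sub _ continuousOn_const
    apply ContinuousOn.add _ continuousOn_const
    apply ContinuousOn.add continuousOn_id
    exact continuousOn_const.mul (Real.continuousOn_log.mono
      (fun x hx => ne_of_gt (lt_of_lt_of_le ha0 hx.1)))
  have hfa : h a ≤ 0 := by
    have h1 : a ≤ 1 := min_le_left _ _
    have h2 : Real.log a ≤ (y - τ - 1) / τ := by
      rw [Real.log_le_iff_le_exp ha0]
      exact min_le_right _ _
    have h3 : τ * Real.log a ≤ y - τ - 1 := by
      have := mul_le_mul_of_nonneg_left h2 hτ.le
      rw [mul_div_cancel₀ _ hτ.ne'] at this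
      linarith
    simp only [hh]; linarith
  have hfb : 0 ≤ h b := by
    have h1 : (1:ℝ) ≤ b := le_max_left _ _
    have h2 : y ≤ b := le_max_right _ _
    have h3 : 0 ≤ Real.log b := Real.log_nonneg h1
    have h4 : 0 ≤ τ * Real.log b := mul_nonneg hτ.le h3
    simp only [hh]; linarith
  have := intermediate_value_Icc hab hc ⟨hfa, hfb⟩
  obtain ⟨q, hqmem, hq0⟩ := this
  refine ⟨q, lt_of_lt_of_le ha0 hqmem.1, ?_⟩
  have : q + τ * Real.log q + τ - y = 0 := hq0
  have h5 : τ * (Real.log q + 1) = τ * Real.log q + τ := by ring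
  linarith

/-- `prox_{τφ}(y) = τ W₀((1/τ) e^{y/τ - 1})` where `W₀(t)` is the
unique `w ≥ 0` with `w e^w = t`; equivalently `p = prox_{τφ}(y)` is the unique
`p > 0` with `y - p = τ(ln p + 1)`. -/
theorem prox_entropy (τ y : ℝ) (hτ : 0 < τ) :
    (∃! p : ℝ, IsProx ent τ y p) ∧
    (∀ p : ℝ, IsProx ent τ y p →
      (0 < p ∧ y - p = τ * (Real.log p + 1)) ∧
      ∀ w : ℝ, 0 ≤ w → w * Real.exp w = (1 / τ) * Real.exp (y / τ - 1) →
        p = τ * w) ∧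
    (∀ q : ℝ, 0 < q → y - q = τ * (Real.log q + 1) → IsProx ent τ y q) := by
  obtain ⟨q, hq0, heq⟩ := ent_exists_root τ y hτ
  have hprox : IsProx ent τ y q := ent_isProx τ y q hτ hq0 heq
  -- any prox point equals q
  have huniq : ∀ p : ℝ, IsProx ent τ y p → p = q := by
    intro p hp
    have h1 := hp q
    have hentq : ent q = ((q * Real.log q : ℝ) : EReal) := by simp [ent, hq0]
    rw [hentq, ← EReal.coe_mul, ← EReal.coe_add] at h1
    rcases lt_trichotomy p 0 with hpneg | hp0 | hppos
    · exfalso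
      have hentp : ent p = ⊤ := by simp [ent, hpneg.ne, not_lt.mpr hpneg.le]
      rw [hentp, EReal.mul_top_of_pos (by exact_mod_cast hτ), EReal.top_add_coe] at h1
      exact (EReal.coe_lt_top _).not_ge h1
    · exfalso
      subst hp0
      have hentp : ent 0 = 0 := by simp [ent]
      rw [hentp, mul_zero, zero_add, EReal.coe_le_coe_iff] at h1
      simp only [Real.norm_eq_abs, sq_abs, sub_zero] at h1
      have := ent_zero_gap τ y q hτ hq0 heq
      nlinarith [this, hq0, hτ, mul_pos hτ hq0, sq_nonneg q]
    · have hentp : ent p = ((p * Real.log p : ℝ) : EReal) := by simp [ent, hppos]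
      rw [hentp, ← EReal.coe_mul, ← EReal.coe_add, EReal.coe_le_coe_iff] at h1
      simp only [Real.norm_eq_abs, sq_abs] at h1
      have hk := ent_key τ y q p hτ hq0 heq hppos
      have : (p - q) ^ 2 ≤ 0 := by nlinarith [hk, h1]
      have : p - q = 0 := by nlinarith [sq_nonneg (p - q)]
      linarith
  refine ⟨⟨q, hprox, huniq⟩, ?_, fun q' hq' heq' => ent_isProx τ y q' hτ hq' heq'⟩
  intro p hp
  have hpq := huniq p hp
  subst hpq
  refine ⟨⟨hq0, heq⟩, ?_⟩
  intro w hw hwe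
  -- (1/τ) exp(y/τ - 1) = (p/τ) exp(p/τ)
  have h1 : y / τ - 1 = Real.log p + p / τ := by
    field_simp
    nlinarith [heq]
  rw [h1, Real.exp_add, Real.exp_log hq0] at hwe
  set w' := p / τ with hw'
  have hw'0 : 0 < w' := div_pos hq0 hτ
  have hwe' : w * Real.exp w = w' * Real.exp w' := by
    rw [hwe, hw']; field_simp
  have : w = w' := by
    rcases lt_trichotomy w w' with hlt | heqw | hgt
    · exfalso
      have : w * Real.exp w < w' * Real.exp w' := by
        calc w * Real.exp w ≤ w * Real.exp w' :=
              mul_le_mul_of_nonneg_left (Real.exp_le_exp.mpr hlt.le) hw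
        _ < w' * Real.exp w' := mul_lt_mul_of_pos_right hlt (Real.exp_pos _)
      linarith [hwe']
    · exact heqw
    · exfalso
      have : w' * Real.exp w' < w * Real.exp w := by
        calc w' * Real.exp w' ≤ w' * Real.exp w :=
              mul_le_mul_of_nonneg_left (Real.exp_le_exp.mpr hgt.le) hw'0.le
        _ < w * Real.exp w := mul_lt_mul_of_pos_right hgt (Real.exp_pos _)
      linarith [hwe']
  rw [this, hw']
  field_simp
end

section
/- Let φ ∈ Γ₀(ℝ) be even and set f = φ ∘ ‖·‖ on a real Hilbert space H; let γ > 0 and (x,η) ∈ H × ℝ. If η + γ φ*(P_{cl(dom φ*)}(‖x‖/γ)) ≤ 0 then prox_{γ𝑓̃}(x,η) = ((1 − γ P_{cl(dom φ*)}(‖x‖/γ)/‖x‖) x, 0) when x ≠ 0, and (0,0) when x = 0. -/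
open scoped RealInnerProductSpace
open Filter Topology

section Helpers
variable {φ : ℝ → EReal}

lemma cvx_real (hcvx : Convex ℝ (epi φ)) {a b t α β : ℝ} (ht0 : 0 ≤ t) (ht1 : t ≤ 1)
    (ha : φ a = (α : EReal)) (hb : φ b = (β : EReal)) :
    φ (t * a + (1 - t) * b) ≤ ((t * α + (1 - t) * β : ℝ) : EReal) := by
  have h1 : (a, α) ∈ epi φ := by simp [epi, ha]
  have h2 : (b, β) ∈ epi φ := by simp [epi, hb]
  have h := hcvx h1 h2 (a := t) (b := 1 - t) ht0 (by linarith) (by ring)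
  simpa [epi, Prod.smul_mk, smul_eq_mul, EReal.coe_add, EReal.coe_mul] using h

/-- φ has a real minimum at 0. -/
lemma phi_zero (hbot : ∀ ξ, φ ξ ≠ ⊥) (hdom : ∃ ξ, φ ξ ≠ ⊤)
    (heven : ∀ ξ : ℝ, φ (-ξ) = φ ξ) (hcvx : Convex ℝ (epi φ)) :
    ∃ c : ℝ, φ 0 = (c : EReal) ∧ ∀ ξ, (c : EReal) ≤ φ ξ := by
  have key : ∀ ξ v : ℝ, φ ξ = (v : EReal) → φ 0 ≤ (v : EReal) := by
    intro ξ v hv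
    have hneg : φ (-ξ) = (v : EReal) := by rw [heven]; exact hv
    have h := cvx_real hcvx (t := (1:ℝ)/2) (by norm_num) (by norm_num) hv hneg
    have e1 : (1:ℝ)/2 * ξ + (1 - 1/2) * (-ξ) = 0 := by ring
    have e2 : (1:ℝ)/2 * v + (1 - 1/2) * v = v := by ring
    rwa [e1, e2] at h
  obtain ⟨ξ₀, hξ₀⟩ := hdom
  lift φ ξ₀ to ℝ using ⟨hξ₀, hbot ξ₀⟩ with v hv
  have h0 : φ 0 ≤ (v : EReal) := key ξ₀ v hv.symm
  have h0top : φ 0 ≠ ⊤ := fun h => by simp [h] at h0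
  lift φ 0 to ℝ using ⟨h0top, hbot 0⟩ with c hc
  refine ⟨c, rfl, fun ξ => ?_⟩
  by_cases hξ : φ ξ = ⊤
  · simp [hξ]
  · lift φ ξ to ℝ using ⟨hξ, hbot ξ⟩ with w hw
    exact key ξ w hw.symm

/-- φ is nondecreasing on [0, ∞). -/
lemma phi_mono (hbot : ∀ ξ, φ ξ ≠ ⊥) (heven : ∀ ξ : ℝ, φ (-ξ) = φ ξ)
    (hcvx : Convex ℝ (epi φ)) {s r : ℝ} (hs : 0 ≤ s) (hsr : s ≤ r) : φ s ≤ φ r := by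
  rcases eq_or_lt_of_le (hs.trans hsr) with hr | hr
  · have : s = r := le_antisymm hsr (by linarith)
    rw [this]
  · by_cases htop : φ r = ⊤
    · simp [htop]
    lift φ r to ℝ using ⟨htop, hbot r⟩ with v hv
    have hneg : φ (-r) = (v : EReal) := by rw [heven]; exact hv.symm
    set t := (s + r) / (2 * r) with ht
    have ht0 : 0 ≤ t := by positivity
    have ht1 : t ≤ 1 := by rw [ht]; rw [div_le_one (by linarith)]; linarith
    have h := cvx_real hcvx ht0 ht1 hv.symm hneg
    have e1 : t * r + (1 - t) * (-r) = s := by rw [ht]; field_simp; ring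
    have e2 : t * v + (1 - t) * v = v := by ring
    rw [e1, e2] at h
    exact h

end Helpers

section Helpers2
variable {φ : ℝ → EReal}

lemma fenchel_realdef (u : ℝ) : fenchel φ u = ⨆ ξ : ℝ, ((ξ * u : ℝ) : EReal) - φ ξ := by
  unfold fenchel; congr 1; funext ξ; rw [show ⟪ξ, u⟫ = ξ * u by simp [mul_comm]]

lemma le_fenchel (u ξ : ℝ) : ((ξ * u : ℝ) : EReal) - φ ξ ≤ fenchel φ u := by
  rw [fenchel_realdef]; exact le_iSup (fun ζ : ℝ => (((ζ * u : ℝ)) : EReal) - φ ζ) ξ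

lemma neg_c_le_fenchel {c : ℝ} (hc : φ 0 = (c : EReal)) (u : ℝ) :
    ((-c : ℝ) : EReal) ≤ fenchel φ u := by
  have h := le_fenchel (φ := φ) u 0
  rw [hc, zero_mul, ← EReal.coe_sub] at h
  simpa using h

lemma fenchel_young (hbot : ∀ ξ, φ ξ ≠ ⊥) {u A : ℝ} (hA : fenchel φ u ≤ (A : EReal)) (ξ : ℝ) :
    ((ξ * u - A : ℝ) : EReal) ≤ φ ξ := by
  by_cases h : φ ξ = ⊤
  · simp [h]
  · lift φ ξ to ℝ using ⟨h, hbot ξ⟩ with w hw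
    have h2 := (le_fenchel (φ := fun ζ => φ ζ) u ξ).trans hA
    rw [← hw, ← EReal.coe_sub, EReal.coe_le_coe_iff] at h2
    exact EReal.coe_le_coe_iff.2 (by linarith)

lemma fenchel_even (heven : ∀ ξ : ℝ, φ (-ξ) = φ ξ) (u : ℝ) :
    fenchel φ (-u) = fenchel φ u := by
  have key : ∀ v : ℝ, fenchel φ (-v) ≤ fenchel φ v := by
    intro v
    rw [fenchel_realdef, fenchel_realdef]
    refine iSup_le fun ξ => ?_
    have h : ((ξ * -v : ℝ) : EReal) - φ ξ = (((-ξ) * v : ℝ) : EReal) - φ (-ξ) := by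
      rw [heven]; norm_num
    rw [h]; exact le_iSup (fun ζ => (((ζ * v : ℝ)) : EReal) - φ ζ) (-ξ)
  refine le_antisymm (key u) ?_
  have := key (-u); rwa [neg_neg] at this

lemma edom_fenchel_convex (hbot : ∀ ξ, φ ξ ≠ ⊥) {c : ℝ} (hc : φ 0 = (c : EReal)) :
    Convex ℝ {u : ℝ | fenchel φ u ≠ ⊤} := by
  intro u hu v hv a b ha hb hab
  simp only [Set.mem_setOf_eq] at hu hv ⊢
  have hub : fenchel φ u ≠ ⊥ := fun h => by simpa [h] using neg_c_le_fenchel hc u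
  have hvb : fenchel φ v ≠ ⊥ := fun h => by simpa [h] using neg_c_le_fenchel hc v
  lift fenchel φ u to ℝ using ⟨hu, hub⟩ with p hp
  lift fenchel φ v to ℝ using ⟨hv, hvb⟩ with r hr
  have key : fenchel φ (a • u + b • v) ≤ ((a * p + b * r : ℝ) : EReal) := by
    rw [fenchel_realdef]
    refine iSup_le fun ξ => ?_
    by_cases hξ : φ ξ = ⊤
    · simp [hξ]
    · lift φ ξ to ℝ using ⟨hξ, hbot ξ⟩ with w hw
      have h1 : ξ * u - w ≤ p := by
        have := (le_fenchel u ξ).trans_eq hp.symm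
        rwa [← hw, ← EReal.coe_sub, EReal.coe_le_coe_iff] at this
      have h2 : ξ * v - w ≤ r := by
        have := (le_fenchel v ξ).trans_eq hr.symm
        rwa [← hw, ← EReal.coe_sub, EReal.coe_le_coe_iff] at this
      rw [← EReal.coe_sub, EReal.coe_le_coe_iff]
      have e : ξ * (a • u + b • v) - w = a * (ξ * u - w) + b * (ξ * v - w) := by
        simp only [smul_eq_mul]; linear_combination w * hab
      rw [e]
      nlinarith [mul_le_mul_of_nonneg_left h1 ha, mul_le_mul_of_nonneg_left h2 hb]
  intro htop
  rw [htop] at key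
  exact (EReal.coe_lt_top _).not_ge key

end Helpers2

section RecLemmas
variable {φ : ℝ → EReal} {H : Type*} [NormedAddCommGroup H] [InnerProductSpace ℝ H]

lemma rec_zero (hbot : ∀ ξ, φ ξ ≠ ⊥) {c : ℝ} (hc : φ 0 = (c : EReal)) :
    recFn (fun y : H => φ ‖y‖) 0 = 0 := by
  apply le_antisymm
  · refine iSup_le fun z => iSup_le fun hz => ?_
    lift φ ‖z‖ to ℝ using ⟨hz, hbot _⟩ with w hw
    rw [add_zero, ← hw, ← EReal.coe_sub]
    simp
  · refine le_trans ?_ (le_iSup_of_le 0 (le_iSup_of_le (by simp [hc]) le_rfl))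
    simp [hc, ← EReal.coe_sub]

lemma fenchelH_le (hbot : ∀ ξ, φ ξ ≠ ⊥) {A : ℝ} (u : H) (hA : fenchel φ ‖u‖ ≤ (A : EReal)) :
    fenchel (fun z : H => φ ‖z‖) u ≤ (A : EReal) := by
  refine iSup_le fun z => ?_
  by_cases hz : φ ‖z‖ = ⊤
  · simp [hz]
  · lift φ ‖z‖ to ℝ using ⟨hz, hbot _⟩ with w hw
    have h1 : (‖z‖ * ‖u‖ - A : ℝ) ≤ w := by
      have h := fenchel_young hbot hA ‖z‖
      rw [← hw, EReal.coe_le_coe_iff] at h; exact h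
    rw [← EReal.coe_sub, EReal.coe_le_coe_iff]
    have h2 : ⟪z, u⟫ ≤ ‖z‖ * ‖u‖ := real_inner_le_norm z u
    linarith

lemma rec_ge (hbot : ∀ ξ, φ ξ ≠ ⊥) {c : ℝ} (hc : φ 0 = (c : EReal)) {A : ℝ}
    (u : H) (hA : fenchel φ ‖u‖ ≤ (A : EReal)) (y : H) :
    ((⟪y, u⟫ : ℝ) : EReal) ≤ recFn (fun z : H => φ ‖z‖) y := by
  set f : H → EReal := fun z : H => φ ‖z‖ with hf
  have hFle : fenchel f u ≤ (A : EReal) := fenchelH_le hbot u hA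
  have hFbot : fenchel f u ≠ ⊥ := by
    intro h
    have h2 := le_iSup (fun z : H => ((⟪z, u⟫ : ℝ) : EReal) - f z) 0
    rw [← fenchel, h] at h2
    simp only [le_bot_iff] at h2
    rw [show f 0 = (c : EReal) by simp [hf, hc]] at h2
    simp [← EReal.coe_sub] at h2
  have hFtop : fenchel f u ≠ ⊤ := fun h => by rw [h] at hFle; exact (EReal.coe_lt_top A).not_ge hFle
  lift fenchel f u to ℝ using ⟨hFtop, hFbot⟩ with B hB
  have key : ∀ ε : ℝ, 0 < ε → ∃ R : ℝ, (⟪y, u⟫ - ε : ℝ) < R ∧ ((R : ℝ) : EReal) ≤ recFn f y := by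
    intro ε hε
    have hlt : ((B - ε : ℝ) : EReal) < ⨆ z : H, ((⟪z, u⟫ : ℝ) : EReal) - f z := by
      rw [← fenchel, ← hB]
      exact_mod_cast sub_lt_self B hε
    obtain ⟨z, hz⟩ := lt_iSup_iff.mp hlt
    have hztop : f z ≠ ⊤ := by
      intro h; rw [h] at hz; simp at hz
    have hzbot : f z ≠ ⊥ := hbot _
    lift f z to ℝ using ⟨hztop, hzbot⟩ with w hw
    rw [← EReal.coe_sub, EReal.coe_lt_coe_iff] at hz
    have hfy : ((⟪z + y, u⟫ - B : ℝ) : EReal) ≤ f (z + y) := by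
      by_cases h : f (z + y) = ⊤
      · simp [h]
      · lift f (z + y) to ℝ using ⟨h, hbot _⟩ with w2 hw2
        have h3 := (le_iSup (fun z : H => ((⟪z, u⟫ : ℝ) : EReal) - f z) (z + y)).trans_eq hB.symm
        rw [← hw2, ← EReal.coe_sub, EReal.coe_le_coe_iff] at h3
        exact EReal.coe_le_coe_iff.2 (by linarith)
    refine ⟨⟪z + y, u⟫ - B - w, ?_, ?_⟩
    · rw [inner_add_left]; linarith
    · refine le_trans ?_ (le_iSup_of_le z (le_iSup_of_le (show f z ≠ ⊤ by rw [← hw]; exact hztop) le_rfl))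
      rw [← hw]
      calc ((⟪z + y, u⟫ - B - w : ℝ) : EReal) = ((⟪z + y, u⟫ - B : ℝ) : EReal) - (w : EReal) := by
            rw [← EReal.coe_sub]
        _ ≤ f (z + y) - (w : EReal) := EReal.sub_le_sub hfy le_rfl
  by_contra hlt
  push_neg at hlt
  obtain ⟨R₁, _, hR₁⟩ := key 1 one_pos
  have hbot' : recFn f y ≠ ⊥ := fun h => by rw [h] at hR₁; simp at hR₁
  have htop' : recFn f y ≠ ⊤ := fun h => by rw [h] at hlt; exact (lt_irrefl _ (hlt.trans_le le_top))
  lift recFn f y to ℝ using ⟨htop', hbot'⟩ with R hR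
  rw [EReal.coe_lt_coe_iff] at hlt
  obtain ⟨R₂, hR₂a, hR₂b⟩ := key (⟪y, u⟫ - R) (by linarith)
  rw [EReal.coe_le_coe_iff] at hR₂b
  linarith

end RecLemmas

section Slope
variable {φ : ℝ → EReal}

lemma fenchel_finite_of_domtop (hbot : ∀ ξ, φ ξ ≠ ⊥) {c : ℝ} (hc : φ 0 = (c : EReal))
    (hmin : ∀ ξ, (c : EReal) ≤ φ ξ) (heven : ∀ ξ : ℝ, φ (-ξ) = φ ξ)
    (hcvx : Convex ℝ (epi φ)) {ξ₁ : ℝ} (hξ₁pos : 0 < ξ₁) (hξ₁ : φ ξ₁ = ⊤) (u : ℝ) :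
    fenchel φ u ≠ ⊤ := by
  have hbig : ∀ ξ : ℝ, ξ₁ < ξ → φ ξ = ⊤ := by
    intro ξ hξ
    by_contra hne
    lift φ ξ to ℝ using ⟨hne, hbot ξ⟩ with w hw
    have hξpos : 0 < ξ := hξ₁pos.trans hξ
    set t := ξ₁ / ξ with htdef
    have ht0 : 0 ≤ t := by positivity
    have ht1 : t ≤ 1 := by rw [htdef, div_le_one hξpos]; linarith
    have h := cvx_real hcvx ht0 ht1 hw.symm hc
    have e1 : t * ξ + (1 - t) * 0 = ξ₁ := by rw [htdef]; field_simp; ring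
    rw [e1, hξ₁] at h
    exact (EReal.coe_lt_top _).not_ge h
  have hout : ∀ ξ : ℝ, ξ₁ < |ξ| → φ ξ = ⊤ := by
    intro ξ hξ
    rcases le_or_gt 0 ξ with h | h
    · exact hbig ξ (by rwa [abs_of_nonneg h] at hξ)
    · rw [← heven ξ]
      exact hbig (-ξ) (by rwa [abs_of_neg h] at hξ)
  intro htop
  have hF : fenchel φ u ≤ ((ξ₁ * |u| - c : ℝ) : EReal) := by
    rw [fenchel_realdef]
    refine iSup_le fun ξ => ?_
    by_cases hξ : φ ξ = ⊤
    · simp [hξ]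
    · have habs : |ξ| ≤ ξ₁ := by
        by_contra hgt; push_neg at hgt; exact hξ (hout ξ hgt)
      lift φ ξ to ℝ using ⟨hξ, hbot ξ⟩ with w hw
      have hwc : c ≤ w := by
        have := hmin ξ; rw [← hw, EReal.coe_le_coe_iff] at this; exact this
      rw [← EReal.coe_sub, EReal.coe_le_coe_iff]
      have h1 : ξ * u ≤ |ξ| * |u| := by
        calc ξ * u ≤ |ξ * u| := le_abs_self _
          _ = |ξ| * |u| := abs_mul ξ u
      nlinarith [abs_nonneg u, mul_le_mul_of_nonneg_right habs (abs_nonneg u)]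
  rw [htop] at hF
  exact (EReal.coe_lt_top _).not_ge hF

lemma slope_bound (hbot : ∀ ξ, φ ξ ≠ ⊥) (heven : ∀ ξ : ℝ, φ (-ξ) = φ ξ)
    (hcvx : Convex ℝ (epi φ)) {c : ℝ} (hc : φ 0 = (c : EReal))
    (hmin : ∀ ξ, (c : EReal) ≤ φ ξ) (htop : ∀ ξ, φ ξ ≠ ⊤) {q : ℝ} (hq0 : 0 ≤ q)
    (hmax : ∀ u : ℝ, fenchel φ u ≠ ⊤ → u ≤ q) {s t : ℝ} (hs : 0 ≤ s) (ht : 0 ≤ t) :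
    φ (s + t) ≤ φ s + ((q * t : ℝ) : EReal) := by
  set ψ : ℝ → ℝ := fun ξ => (φ ξ).toReal with hψdef
  have hψ : ∀ ξ, φ ξ = ((ψ ξ : ℝ) : EReal) := fun ξ => (EReal.coe_toReal (htop ξ) (hbot ξ)).symm
  have hψeven : ∀ ξ, ψ (-ξ) = ψ ξ := fun ξ => by rw [hψdef]; simp only; rw [heven]
  have hψcvx : ConvexOn ℝ (Set.univ : Set ℝ) ψ := by
    refine ⟨convex_univ, fun a _ b _ ta tb hta htb htab => ?_⟩
    have h := cvx_real hcvx (t := ta) hta (by linarith) (hψ a) (hψ b)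
    have e : ta * a + (1 - ta) * b = ta • a + tb • b := by
      simp only [smul_eq_mul]; linear_combination (-b) * htab
    rw [e] at h
    have e2 : (1 - ta) = tb := by linarith
    rw [hψ (ta • a + tb • b), EReal.coe_le_coe_iff] at h
    rw [e2] at h
    simpa [smul_eq_mul] using h
  have hψmin : ∀ ξ, ψ 0 ≤ ψ ξ := by
    intro ξ
    have := hmin ξ
    rw [hψ ξ, EReal.coe_le_coe_iff] at this
    have hc0 : ψ 0 = c := by rw [hψ 0] at hc; exact_mod_cast hc
    linarith [this, hc0.le]
  -- main real claim
  have main : ψ (s + t) - ψ s ≤ q * t := by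
    rcases eq_or_lt_of_le ht with ht0 | htpos
    · rw [← ht0]; simp
    by_contra hcon
    push_neg at hcon
    set m := (ψ (s + t) - ψ s) / t with hmdef
    have hm : q < m := by rw [hmdef, lt_div_iff₀ htpos]; linarith
    set m' := (q + m) / 2 with hm'def
    have hm'q : q < m' := by rw [hm'def]; linarith
    have hm'm : m' < m := by rw [hm'def]; linarith
    have hm'pos : 0 < m' := lt_of_le_of_lt hq0 hm'q
    have hslope : ∀ ξ : ℝ, s + t < ξ → ψ (s + t) + m * (ξ - (s + t)) ≤ ψ ξ := by
      intro ξ hξ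
      have h := hψcvx.slope_mono_adjacent (Set.mem_univ s) (Set.mem_univ ξ)
        (show s < s + t by linarith) hξ
      rw [show s + t - s = t by ring] at h
      rw [← hmdef] at h
      have hpos : 0 < ξ - (s + t) := by linarith
      rw [le_div_iff₀ hpos] at h
      linarith
    set M := |m'| * (s + t) + |m| * (s + t) + |ψ 0| + |ψ (s + t)| + 1 with hMdef
    have hF : fenchel φ m' ≤ ((M : ℝ) : EReal) := by
      rw [fenchel_realdef]
      refine iSup_le fun ξ => ?_
      rw [hψ ξ, ← EReal.coe_sub, EReal.coe_le_coe_iff]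
      have hst : 0 ≤ s + t := add_nonneg hs ht
      rcases le_or_gt ξ (s + t) with h1 | h1
      · rcases le_or_gt (-(s + t)) ξ with h2 | h2
        · have e1 : ξ * m' ≤ |ξ| * |m'| := by
            calc ξ * m' ≤ |ξ * m'| := le_abs_self _
              _ = |ξ| * |m'| := abs_mul _ _
          have e2 : |ξ| * |m'| ≤ (s + t) * |m'| :=
            mul_le_mul_of_nonneg_right (abs_le.2 ⟨by linarith, h1⟩) (abs_nonneg m')
          have e3 : ψ 0 ≤ ψ ξ := hψmin ξ
          have e4 : -|ψ 0| ≤ ψ 0 := neg_abs_le _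
          have e5 : (0:ℝ) ≤ |m| * (s + t) := mul_nonneg (abs_nonneg m) hst
          have e6 : (0:ℝ) ≤ |ψ (s + t)| := abs_nonneg _
          have e7 : (s + t) * |m'| = |m'| * (s + t) := mul_comm _ _
          linarith
        · have hslξ := hslope (-ξ) (by linarith)
          rw [hψeven ξ] at hslξ
          have hsum : 0 < m' + m := by linarith
          have P1 : ξ * (m' + m) ≤ (-(s + t)) * (m' + m) :=
            mul_le_mul_of_nonneg_right h2.le hsum.le
          have P2 : (-(s + t)) * (m' + m) ≤ 0 :=
            mul_nonpos_of_nonpos_of_nonneg (by linarith) hsum.le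
          have P3 : m * (s + t) ≤ |m| * (s + t) :=
            mul_le_mul_of_nonneg_right (le_abs_self m) hst
          have P4 : -|ψ (s + t)| ≤ ψ (s + t) := neg_abs_le _
          have P5 : (0:ℝ) ≤ |m'| * (s + t) := mul_nonneg (abs_nonneg m') hst
          have P6 : (0:ℝ) ≤ |ψ 0| := abs_nonneg _
          nlinarith [hslξ, P1, P2, P3, P4, P5, P6]
      · have hslξ := hslope ξ h1
        have hdiff : m' - m ≤ 0 := by linarith
        have P1 : ξ * (m' - m) ≤ (s + t) * (m' - m) :=
          mul_le_mul_of_nonpos_right h1.le hdiff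
        have P2 : (s + t) * (m' - m) ≤ 0 := mul_nonpos_of_nonneg_of_nonpos hst hdiff
        have P3 : m * (s + t) ≤ |m| * (s + t) :=
          mul_le_mul_of_nonneg_right (le_abs_self m) hst
        have P4 : -|ψ (s + t)| ≤ ψ (s + t) := neg_abs_le _
        have P5 : (0:ℝ) ≤ |m'| * (s + t) := mul_nonneg (abs_nonneg m') hst
        have P6 : (0:ℝ) ≤ |ψ 0| := abs_nonneg _
        nlinarith [hslξ, P1, P2, P3, P4, P5, P6]
    have := hmax m' (fun h => by rw [h] at hF; exact (EReal.coe_lt_top _).not_ge hF)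
    linarith
  rw [hψ (s + t), hψ s, ← EReal.coe_add, EReal.coe_le_coe_iff]
  linarith

end Slope

section RecLe
variable {φ : ℝ → EReal} {H : Type*} [NormedAddCommGroup H] [InnerProductSpace ℝ H]

lemma rec_le (hbot : ∀ ξ, φ ξ ≠ ⊥) (heven : ∀ ξ : ℝ, φ (-ξ) = φ ξ)
    (hcvx : Convex ℝ (epi φ)) {c : ℝ} (hc : φ 0 = (c : EReal))
    (hmin : ∀ ξ, (c : EReal) ≤ φ ξ) (htop : ∀ ξ, φ ξ ≠ ⊤) {q : ℝ} (hq0 : 0 ≤ q)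
    (hmax : ∀ u : ℝ, fenchel φ u ≠ ⊤ → u ≤ q) (p : H) :
    recFn (fun y : H => φ ‖y‖) p ≤ ((q * ‖p‖ : ℝ) : EReal) := by
  refine iSup_le fun z => iSup_le fun _ => ?_
  have h1 : φ ‖z + p‖ ≤ φ (‖z‖ + ‖p‖) :=
    phi_mono hbot heven hcvx (norm_nonneg _) (norm_add_le z p)
  have h2 : φ (‖z‖ + ‖p‖) ≤ φ ‖z‖ + ((q * ‖p‖ : ℝ) : EReal) :=
    slope_bound hbot heven hcvx hc hmin htop hq0 hmax (norm_nonneg z) (norm_nonneg p)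
  lift φ ‖z + p‖ to ℝ using ⟨htop _, hbot _⟩ with w1 hw1
  lift φ ‖z‖ to ℝ using ⟨htop _, hbot _⟩ with w2 hw2
  have h3 := h1.trans h2
  rw [← EReal.coe_add, EReal.coe_le_coe_iff] at h3
  rw [← EReal.coe_sub, EReal.coe_le_coe_iff]
  linarith

end RecLe

section Master
variable {φ : ℝ → EReal} {H : Type*} [NormedAddCommGroup H] [InnerProductSpace ℝ H]

lemma persp_lb (hbot : ∀ ξ, φ ξ ≠ ⊥) {c : ℝ} (hc : φ 0 = (c : EReal))
    {γ η A : ℝ} (hγ : 0 < γ) (hηA : η + γ * A ≤ 0)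
    (u : H) (hA : fenchel φ ‖u‖ ≤ (A : EReal)) (y : H) (ν : ℝ)
    (hT : persp (fun z : H => φ ‖z‖) (y, ν) ≠ ⊤) :
    ∃ b : ℝ, persp (fun z : H => φ ‖z‖) (y, ν) = (b : EReal) ∧
      γ * ⟪y, u⟫ + ν * η ≤ γ * b := by
  set f : H → EReal := fun z : H => φ ‖z‖ with hf
  rcases lt_trichotomy ν 0 with hν | hν | hν
  · exact absurd (by simp [persp, not_lt.2 hν.le, hν.ne]) hT
  · subst hν
    have heq : persp f (y, 0) = recFn f y := by simp [persp]
    have hge := rec_ge hbot hc u hA y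
    rw [heq] at hT
    have hbotr : recFn f y ≠ ⊥ := fun h => by rw [h] at hge; simp at hge
    lift recFn f y to ℝ using ⟨hT, hbotr⟩ with b hb
    rw [← hf, ← hb, EReal.coe_le_coe_iff] at hge
    refine ⟨b, by rw [heq], ?_⟩
    have := mul_le_mul_of_nonneg_left hge hγ.le
    linarith
  · have heq : persp f (y, ν) = (ν : EReal) * φ ‖ν⁻¹ • y‖ := by simp [persp, hν, hf]
    have hnorm : ‖ν⁻¹ • y‖ = ‖y‖ / ν := by
      rw [norm_smul, norm_inv, Real.norm_eq_abs, abs_of_pos hν]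
      ring
    have hφtop : φ (‖y‖ / ν) ≠ ⊤ := by
      intro h; apply hT; rw [heq, hnorm, h, EReal.coe_mul_top_of_pos hν]
    lift φ (‖y‖ / ν) to ℝ using ⟨hφtop, hbot _⟩ with w hw
    refine ⟨ν * w, by rw [heq, hnorm, ← hw, ← EReal.coe_mul], ?_⟩
    have hfy := fenchel_young hbot hA (‖y‖ / ν)
    rw [← hw, EReal.coe_le_coe_iff] at hfy
    have hcs : ⟪y, u⟫ ≤ ‖y‖ * ‖u‖ := real_inner_le_norm y u
    have hyr : ‖y‖ / ν * ν = ‖y‖ := by field_simp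
    have hη : η ≤ -(γ * A) := by linarith
    have F1 := mul_le_mul_of_nonneg_left hfy (mul_nonneg hγ.le hν.le)
    have F3 := mul_le_mul_of_nonneg_left hη hν.le
    have F2 := mul_le_mul_of_nonneg_left hcs hγ.le
    rw [← hyr] at F2
    nlinarith [F1, F2, F3]

lemma master (hbot : ∀ ξ, φ ξ ≠ ⊥) {c : ℝ} (hc : φ 0 = (c : EReal))
    {γ η A : ℝ} (hγ : 0 < γ) (hηA : η + γ * A ≤ 0)
    (u : H) (hA : fenchel φ ‖u‖ ≤ (A : EReal)) (x : H)
    (hB : persp (fun y : H => φ ‖y‖) (x - γ • u, 0) = ((⟪x - γ • u, u⟫ : ℝ) : EReal)) :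
    IsProx2 (persp fun y : H => φ ‖y‖) γ x η (x - γ • u) 0 := by
  intro y ν
  set f : H → EReal := fun z : H => φ ‖z‖ with hf
  set p : H := x - γ • u with hp
  have hxp : x - p = γ • u := by rw [hp]; abel
  by_cases hT : persp f (y, ν) = ⊤
  · rw [hT, EReal.coe_mul_top_of_pos hγ, EReal.top_add_coe]
    exact le_top
  · obtain ⟨b, hbval, hbineq⟩ := persp_lb hbot hc hγ hηA u hA y ν hT
    rw [hbval, hB, hxp, ← EReal.coe_mul, ← EReal.coe_mul, ← EReal.coe_add, ← EReal.coe_add,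
      EReal.coe_le_coe_iff]
    have hxy : ‖x - y‖ ^ 2 = ‖γ • u‖ ^ 2 + 2 * (γ * (⟪p, u⟫ - ⟪y, u⟫)) + ‖p - y‖ ^ 2 := by
      have e : x - y = γ • u + (p - y) := by rw [hxp.symm]; abel
      have e2 : ⟪γ • u, p - y⟫ = γ * (⟪p, u⟫ - ⟪y, u⟫) := by
        rw [real_inner_smul_left, inner_sub_right, real_inner_comm u p, real_inner_comm u y]
      rw [e, norm_add_sq_real, e2]
    nlinarith [sq_nonneg (ν : ℝ), sq_nonneg ‖p - y‖, hbineq, hxy]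

end Master

/-- radial case, nonpositive branch. For even `φ ∈ Γ₀(ℝ)` and
`f = φ ∘ ‖·‖`, if `η + γ φ*(P_{cl dom φ*}(‖x‖/γ)) ≤ 0` then
`prox_{γ f̃}(x,η) = ((1 - γ P_{cl dom φ*}(‖x‖/γ)/‖x‖) x, 0)` for `x ≠ 0`, and
`(0,0)` for `x = 0`. -/
theorem prox_persp_radial_of_nonpos {H : Type*} [NormedAddCommGroup H]
    [InnerProductSpace ℝ H] (φ : ℝ → EReal) (hφ : ProperLscConvex φ)
    (heven : ∀ ξ : ℝ, φ (-ξ) = φ ξ) (γ : ℝ) (hγ : 0 < γ) (x : H) (η : ℝ) (q : ℝ)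
    (hq : IsProj (closure (edom (fenchel φ))) (‖x‖ / γ) q)
    (hle : (η : EReal) + (γ : EReal) * fenchel φ q ≤ 0) :
    (x ≠ 0 → IsProx2 (persp fun y : H => φ ‖y‖) γ x η
        ((1 - γ * q / ‖x‖) • x) 0) ∧
    (x = 0 → IsProx2 (persp fun y : H => φ ‖y‖) γ x η 0 0) := by
  obtain ⟨hbot, hdom, hlsc, hcvx⟩ := hφ
  obtain ⟨c, hc, hmin⟩ := phi_zero hbot hdom heven hcvx
  have hFbot : fenchel φ q ≠ ⊥ := fun h => by simpa [h] using neg_c_le_fenchel hc q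
  have hFtop : fenchel φ q ≠ ⊤ := by
    intro h
    rw [h, EReal.coe_mul_top_of_pos hγ, EReal.coe_add_top] at hle
    exact (lt_irrefl _ (hle.trans_lt (by norm_num : (0:EReal) < ⊤))).elim
  lift fenchel φ q to ℝ using ⟨hFtop, hFbot⟩ with A hA
  have hηA : η + γ * A ≤ 0 := by
    rw [← EReal.coe_mul, ← EReal.coe_add] at hle
    exact_mod_cast hle
  have hcA : -c ≤ A := by
    have h := (neg_c_le_fenchel hc q).trans_eq hA.symm
    exact_mod_cast h
  obtain ⟨hqC, hqmin⟩ := hq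
  have hCsymm : ∀ v, v ∈ closure (edom (fenchel φ)) → -v ∈ closure (edom (fenchel φ)) := by
    intro v hv
    refine map_mem_closure continuous_neg hv fun w hw => ?_
    simp only [edom, Set.mem_setOf_eq] at hw ⊢
    rwa [fenchel_even heven w]
  have hCconv : Convex ℝ (closure (edom (fenchel φ))) := by
    have : edom (fenchel φ) = {u : ℝ | fenchel φ u ≠ ⊤} := rfl
    rw [this]
    exact (edom_fenchel_convex hbot hc).closure
  have hzeroC : (0:ℝ) ∈ closure (edom (fenchel φ)) := by
    have h := hCconv hqC (hCsymm q hqC) (by norm_num : (0:ℝ) ≤ 1/2)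
      (by norm_num : (0:ℝ) ≤ 1/2) (by norm_num)
    simpa using h
  constructor
  · -- x ≠ 0 case
    intro hx
    have hxn : 0 < ‖x‖ := norm_pos_iff.2 hx
    set d := ‖x‖ / γ with hd
    have hdpos : 0 < d := by positivity
    have hdCeq : d ∈ closure (edom (fenchel φ)) → q = d := by
      intro hdC
      have h := hqmin d hdC
      simp only [sub_self, norm_zero, Real.norm_eq_abs] at h
      have h2 : d - q = 0 := abs_eq_zero.1 (le_antisymm h (abs_nonneg _))
      linarith
    have hq0 : 0 ≤ q := by
      have h := hqmin (-q) (hCsymm q hqC)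
      rw [Real.norm_eq_abs, Real.norm_eq_abs, sub_neg_eq_add] at h
      have h2 := mul_self_le_mul_self (abs_nonneg _) h
      rw [abs_mul_abs_self, abs_mul_abs_self] at h2
      nlinarith
    have hqd : q ≤ d := by
      by_contra hgt
      push_neg at hgt
      have hqpos : 0 < q := hdpos.trans hgt
      have hdC : d ∈ closure (edom (fenchel φ)) := by
        have h := hCconv hzeroC hqC (a := 1 - d / q) (b := d / q)
          (by rw [sub_nonneg, div_le_one hqpos]; exact hgt.le)
          (div_nonneg hdpos.le hqpos.le) (by ring)
        have e : (1 - d / q) • (0:ℝ) + (d / q) • q = d := by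
          simp only [smul_eq_mul, mul_zero, zero_add]
          field_simp
        rwa [e] at h
      linarith [hdCeq hdC]
    set u : H := (q / ‖x‖) • x with hu
    have hun : ‖u‖ = q := by
      rw [hu, norm_smul, Real.norm_eq_abs, abs_of_nonneg (div_nonneg hq0 hxn.le)]
      field_simp
    have hAle : fenchel φ ‖u‖ ≤ (A : EReal) := by rw [hun, ← hA]
    have hpeq : (1 - γ * q / ‖x‖) • x = x - γ • u := by
      rw [hu, smul_smul, sub_smul, one_smul]
      congr 1
      rw [mul_div_assoc]
    rw [hpeq]
    have hB : persp (fun y : H => φ ‖y‖) (x - γ • u, 0) = ((⟪x - γ • u, u⟫ : ℝ) : EReal) := by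
      have hpersp : persp (fun y : H => φ ‖y‖) (x - γ • u, 0)
          = recFn (fun y : H => φ ‖y‖) (x - γ • u) := by
        simp [persp]
      rw [hpersp]
      by_cases hp0 : x - γ • u = 0
      · rw [hp0, rec_zero hbot hc]
        simp
      · -- p ≠ 0 : q < d strictly
        have hqd' : q ≠ d := by
          intro hqeq
          apply hp0
          rw [← hpeq]
          have hco : 1 - γ * q / ‖x‖ = 0 := by
            rw [hqeq, hd]; field_simp; ring
          rw [hco, zero_smul]
        have htop : ∀ ξ, φ ξ ≠ ⊤ := by
          by_contra hcon
          push_neg at hcon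
          obtain ⟨ξ₁, hξ₁⟩ := hcon
          have hξ₁ne : ξ₁ ≠ 0 := fun h => by rw [h, hc] at hξ₁; exact (EReal.coe_ne_top c) hξ₁
          have hξ₂ : φ |ξ₁| = ⊤ := by
            rcases abs_cases ξ₁ with ⟨h1, _⟩ | ⟨h1, _⟩
            · rw [h1]; exact hξ₁
            · rw [h1, heven]; exact hξ₁
          have hfin := fenchel_finite_of_domtop hbot hc hmin heven hcvx
            (abs_pos.2 hξ₁ne) hξ₂ d
          have hdC : d ∈ closure (edom (fenchel φ)) := subset_closure hfin
          exact hqd' (hdCeq hdC)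
        have hqlt : q < d := lt_of_le_of_ne hqd hqd'
        have hqmax : ∀ v : ℝ, fenchel φ v ≠ ⊤ → v ≤ q := by
          intro v hv
          have hvC : v ∈ closure (edom (fenchel φ)) := subset_closure hv
          by_contra hgt
          push_neg at hgt
          rcases le_or_gt d v with hdv | hdv
          · have hvq : 0 < v - q := by linarith
            have hdC : d ∈ closure (edom (fenchel φ)) := by
              have h := hCconv hqC hvC (a := 1 - (d - q) / (v - q)) (b := (d - q) / (v - q))
                (by rw [sub_nonneg, div_le_one hvq]; linarith)
                (div_nonneg (by linarith) hvq.le) (by ring)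
              have e : (1 - (d - q) / (v - q)) • q + ((d - q) / (v - q)) • v = d := by
                simp only [smul_eq_mul]
                field_simp
                ring
              rwa [e] at h
            exact hqd' (hdCeq hdC)
          · have h := hqmin v hvC
            rw [Real.norm_eq_abs, Real.norm_eq_abs, abs_of_pos (by linarith : 0 < d - q),
              abs_of_pos (by linarith : 0 < d - v)] at h
            linarith
        -- compute inner product and norm
        have hκ : 0 ≤ 1 - γ * q / ‖x‖ := by
          rw [sub_nonneg, div_le_one hxn]
          rw [hd] at hqd
          calc γ * q ≤ γ * (‖x‖ / γ) := by
                exact mul_le_mul_of_nonneg_left hqd hγ.le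
            _ = ‖x‖ := by field_simp
        have hnp : ‖x - γ • u‖ = (1 - γ * q / ‖x‖) * ‖x‖ := by
          rw [← hpeq, norm_smul, Real.norm_eq_abs, abs_of_nonneg hκ]
        have hip : ⟪x - γ • u, u⟫ = q * ‖x - γ • u‖ := by
          rw [hnp, ← hpeq, hu, real_inner_smul_left, real_inner_smul_right,
            real_inner_self_eq_norm_mul_norm]
          field_simp
        refine le_antisymm ?_ ?_
        · refine (rec_le hbot heven hcvx hc hmin htop hq0 hqmax _).trans_eq ?_
          rw [hip]
        · have h := rec_ge hbot hc u hAle (x - γ • u)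
          exact h
    exact master hbot hc hγ hηA u hAle x hB
  · -- x = 0 case
    intro hx
    subst hx
    have hA0 : fenchel φ ‖(0:H)‖ ≤ (A : EReal) := by
      rw [norm_zero]
      refine le_trans ?_ (EReal.coe_le_coe_iff.2 hcA)
      rw [fenchel_realdef]
      refine iSup_le fun ξ => ?_
      calc ((ξ * 0 : ℝ) : EReal) - φ ξ ≤ ((0:ℝ) : EReal) - ((c:ℝ) : EReal) := by
            rw [mul_zero]; exact EReal.sub_le_sub le_rfl (hmin ξ)
        _ = ((-c : ℝ) : EReal) := by rw [← EReal.coe_sub]; norm_num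
    have hB : persp (fun y : H => φ ‖y‖) ((0:H) - γ • (0:H), 0)
        = ((⟪(0:H) - γ • (0:H), (0:H)⟫ : ℝ) : EReal) := by
      simp only [smul_zero, sub_zero]
      have hpersp : persp (fun y : H => φ ‖y‖) ((0:H), 0)
          = recFn (fun y : H => φ ‖y‖) (0:H) := by
        simp [persp]
      rw [hpersp, rec_zero hbot hc]
      simp
    have hm := master hbot hc hγ hηA (0:H) hA0 (0:H) hB
    have e : (0:H) - γ • (0:H) = 0 := by simp
    rwa [e] at hm
end
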